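/- For t ∈ ℤ, t' = 2t+1, and integers a, L with 1 ≤ a ≤ t and L ≥ 0, the combination Y^{0;t}_{a,t}(L) + q^{L+1−a+t} Y^{1;t}_{a,t+1}(L) equals zero, where Y^{n;t}_{a,b}(L) = Σ_{λ∈ℤ} ( q^{λ²tt' + λ(t'b − 2ta)} T(n, a−b−t'λ, L) − q^{(λt+b)(λt'+2a)} T(n, −a−b−t'λ, L) ). -/

import Mathlib

/- `qq` plays the role of the formal variable `q`, as an element of the
field of rational functions over `ℚ`. -/
noncomputable def qq : RatFunc ℚ := RatFunc.X

/-- `(q)_n = ∏_{i=1}^n (1 - q^i)`. -/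
noncomputable def qp (n : ℕ) : RatFunc ℚ := ∏ i ∈ Finset.range n, (1 - qq ^ (i + 1))

/-- `(q)_n` for an integer index, declared to be `0` for negative `n`
(so that terms with a negative factorial index vanish upon division). -/
noncomputable def qpz (n : ℤ) : RatFunc ℚ := if 0 ≤ n then qp n.toNat else 0

/-- The Andrews–Baxter `q`-trinomial coefficient
`T(n,d,L) = Σ_k q^{k(k+d-n)} (q)_L / ((q)_k (q)_{k+d} (q)_{L-2k-d})`,
where terms with a negative factorial index are zero.  (Any term with a
nonzero contribution has `k ≤ L`, so the range below suffices.) -/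
noncomputable def qT (n d : ℤ) (L : ℕ) : RatFunc ℚ :=
  ∑ k ∈ Finset.range (L + 1),
    qq ^ ((k : ℤ) * ((k : ℤ) + d - n)) * qp L /
      (qp k * qpz ((k : ℤ) + d) * qpz ((L : ℤ) - 2 * k - d))



lemma qq_ne_zero : qq ≠ 0 := RatFunc.X_ne_zero
lemma one_sub_qq_pow_ne_zero (n : ℕ) : (1 : RatFunc ℚ) - qq ^ (n+1) ≠ 0 := by
  have h : (1 : RatFunc ℚ) - qq ^ (n+1) =
      algebraMap (Polynomial ℚ) (RatFunc ℚ) (1 - Polynomial.X ^ (n+1)) := by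
    rw [map_sub, map_pow, RatFunc.algebraMap_X, map_one, qq]
  rw [h]
  intro hc
  have h2 : (1 - Polynomial.X ^ (n+1) : Polynomial ℚ) = 0 :=
    RatFunc.algebraMap_injective ℚ (by simpa using hc)
  have := congrArg (Polynomial.eval 0) h2
  simp at this
lemma qp_ne_zero (n : ℕ) : qp n ≠ 0 := by
  unfold qp
  exact Finset.prod_ne_zero_iff.2 fun i _ => one_sub_qq_pow_ne_zero i
lemma qp_succ (n : ℕ) : qp (n+1) = qp n * (1 - qq ^ (n+1)) := Finset.prod_range_succ _ n
lemma qp_zero : qp 0 = 1 := Finset.prod_range_zero _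
lemma qpz_of_neg {n : ℤ} (h : n < 0) : qpz n = 0 := if_neg (by omega)
lemma qpz_natCast (n : ℕ) : qpz (n : ℤ) = qp n := by simp [qpz]
lemma qpz_zero : qpz 0 = 1 := by rw [show (0:ℤ) = ((0:ℕ):ℤ) from rfl, qpz_natCast, qp_zero]

noncomputable def GG (d : ℤ) (L k : ℕ) : RatFunc ℚ :=
  qq ^ ((k:ℤ) * ((k:ℤ)+d)) * qp L / (qpz ((k:ℤ)-1) * qpz ((k:ℤ)+d) * qpz ((L:ℤ)-2*k-d))



lemma nz {a b c : RatFunc ℚ} (ha : a ≠ 0) (hb : b ≠ 0) (hc : c ≠ 0) : a * b * c ≠ 0 :=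
  mul_ne_zero (mul_ne_zero ha hb) hc

lemma div_qpz_pred (N Y : RatFunc ℚ) (k : ℕ) :
    N / (qpz ((k:ℤ)-1) * Y) = N * (1 - qq^k) / (qp k * Y) := by
  rcases k with _ | k'
  · rw [qpz_of_neg (show ((0:ℕ):ℤ)-1 < 0 by norm_num)]
    simp
  · rw [show ((k'+1:ℕ):ℤ)-1 = ((k':ℕ):ℤ) by push_cast; ring, qpz_natCast, qp_succ k',
      show qp k' * (1-qq^(k'+1)) * Y = (1-qq^(k'+1)) * (qp k' * Y) by ring,
      show N * (1-qq^(k'+1)) = (1-qq^(k'+1)) * N by ring,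
      mul_div_mul_left _ _ (one_sub_qq_pow_ne_zero k')]

lemma step (d : ℤ) (L k : ℕ) :
    qq ^ ((k:ℤ) * ((k:ℤ)+d+1)) * qp L / (qp k * qpz ((k:ℤ)+d+1) * qpz ((L:ℤ)-2*k-d-1))
    + qq ^ ((L:ℤ)-d+(k:ℤ)*((k:ℤ)+d-1)) * qp L / (qp k * qpz ((k:ℤ)+d) * qpz ((L:ℤ)-2*k-d))
    - qq ^ ((L:ℤ)+(k:ℤ)*((k:ℤ)+d)) * qp L / (qp k * qpz ((k:ℤ)+d+1) * qpz ((L:ℤ)-2*k-d-1))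
    - qq ^ ((k:ℤ)*((k:ℤ)+d)) * qp L / (qp k * qpz ((k:ℤ)+d) * qpz ((L:ℤ)-2*k-d))
    = GG d L (k+1) - GG d L k := by
  have hzk : qpz (((k+1:ℕ):ℤ) - 1) = qp k := by
    rw [show ((k+1:ℕ):ℤ)-1 = ((k:ℕ):ℤ) by push_cast; ring, qpz_natCast]
  have hzm2 : qpz ((L:ℤ) - 2*((k+1:ℕ):ℤ) - d) = qpz ((L:ℤ)-2*(k:ℤ)-d-2) := by
    rw [show (L:ℤ) - 2*((k+1:ℕ):ℤ) - d = (L:ℤ)-2*(k:ℤ)-d-2 by push_cast; ring]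
  have hze1' : qpz (((k+1:ℕ):ℤ) + d) = qpz ((k:ℤ)+d+1) := by
    rw [show ((k+1:ℕ):ℤ) + d = (k:ℤ)+d+1 by push_cast; ring]
  rcases lt_trichotomy ((k:ℤ)+d) (-1) with he | he | he
  · -- e < -1 : everything vanishes
    rw [GG, GG, hze1', qpz_of_neg (show (k:ℤ)+d < 0 by omega),
      qpz_of_neg (show (k:ℤ)+d+1 < 0 by omega)]
    simp
  · -- e = -1
    have hz1 : qpz ((k:ℤ)+d+1) = 1 := by
      rw [show (k:ℤ)+d+1 = ((0:ℕ):ℤ) by omega, qpz_natCast, qp_zero]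
    have hz2 : qpz ((k:ℤ)+d) = 0 := qpz_of_neg (by omega)
    have ex1 : qq ^ ((k:ℤ)*((k:ℤ)+d+1)) = 1 := by
      rw [show (k:ℤ)*((k:ℤ)+d+1) = 0 by linear_combination (k:ℤ)*he, zpow_zero]
    have ex5 : qq ^ (((k+1:ℕ):ℤ)*(((k+1:ℕ):ℤ)+d)) = 1 := by
      rw [show ((k+1:ℕ):ℤ)*(((k+1:ℕ):ℤ)+d) = 0 by push_cast; linear_combination ((k:ℤ)+1)*he,
        zpow_zero]
    have ex3 : qq ^ ((L:ℤ)+(k:ℤ)*((k:ℤ)+d)) = qq ^ ((L:ℤ)-(k:ℤ)) := by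
      rw [show (L:ℤ)+(k:ℤ)*((k:ℤ)+d) = (L:ℤ)-(k:ℤ) by linear_combination (k:ℤ)*he]
    rw [GG, GG, hze1', hzk, hzm2, hz1, hz2, ex1, ex5, ex3,
      show (L:ℤ)-2*(k:ℤ)-d-1 = (L:ℤ)-(k:ℤ) by omega,
      show (L:ℤ)-2*(k:ℤ)-d-2 = (L:ℤ)-(k:ℤ)-1 by omega]
    simp only [mul_zero, zero_mul, div_zero, zero_div, mul_one, one_mul, sub_zero, zero_sub,
      add_zero]
    rcases lt_trichotomy ((L:ℤ)-(k:ℤ)) 0 with hM | hM | hM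
    · rw [qpz_of_neg hM, qpz_of_neg (by omega)]
      simp
    · rw [hM, zpow_zero, qpz_zero, qpz_of_neg (by omega)]
      simp
    · obtain ⟨N, hN⟩ : ∃ N:ℕ, (N:ℤ) = (L:ℤ)-(k:ℤ)-1 :=
        ⟨((L:ℤ)-(k:ℤ)-1).toNat, Int.toNat_of_nonneg (by omega)⟩
      rw [show (L:ℤ)-(k:ℤ)-1 = ((N:ℕ):ℤ) by omega, show (L:ℤ)-(k:ℤ) = ((N+1:ℕ):ℤ) by omega,
        qpz_natCast, qpz_natCast, zpow_natCast]
      have hx := one_sub_qq_pow_ne_zero N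
      have hk := qp_ne_zero k
      have hN' := qp_ne_zero N
      rw [div_sub_div_same,
        div_eq_div_iff (mul_ne_zero hk (qp_ne_zero (N+1))) (mul_ne_zero hk hN'), qp_succ N]
      ring
  · -- e ≥ 0
    obtain ⟨E, hE⟩ : ∃ E:ℕ, (E:ℤ) = (k:ℤ)+d := ⟨((k:ℤ)+d).toNat, Int.toNat_of_nonneg (by omega)⟩
    have hqe : qpz ((k:ℤ)+d) = qp E := by rw [← hE, qpz_natCast]
    have hqe1 : qpz ((k:ℤ)+d+1) = qp (E+1) := by
      rw [show (k:ℤ)+d+1 = ((E+1:ℕ):ℤ) by omega, qpz_natCast]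
    have hAne := qp_ne_zero E
    have hkne := qp_ne_zero k
    have hvne := one_sub_qq_pow_ne_zero E
    have ex4 : qq ^ ((k:ℤ)*((k:ℤ)+d)) = qq ^ (k*E) := by
      rw [show (k:ℤ)*((k:ℤ)+d) = ((k*E:ℕ):ℤ) by push_cast; linear_combination (-(k:ℤ))*hE,
        zpow_natCast]
    have ex1 : qq ^ ((k:ℤ)*((k:ℤ)+d+1)) = qq ^ (k*(E+1)) := by
      rw [show (k:ℤ)*((k:ℤ)+d+1) = ((k*(E+1):ℕ):ℤ) by push_cast; linear_combination (-(k:ℤ))*hE,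
        zpow_natCast]
    have ex5 : qq ^ (((k+1:ℕ):ℤ)*(((k+1:ℕ):ℤ)+d)) = qq ^ ((k+1)*(E+1)) := by
      rw [show ((k+1:ℕ):ℤ)*(((k+1:ℕ):ℤ)+d) = (((k+1)*(E+1):ℕ):ℤ) by
        push_cast; linear_combination (-((k:ℤ)+1))*hE, zpow_natCast]
    rcases lt_trichotomy ((L:ℤ)-2*k-d) 0 with hm | hm | hm
    · -- m < 0
      have z1 : qpz ((L:ℤ)-2*(k:ℤ)-d) = 0 := qpz_of_neg hm
      have z2 : qpz ((L:ℤ)-2*(k:ℤ)-d-1) = 0 := qpz_of_neg (by omega)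
      have z3 : qpz ((L:ℤ)-2*(k:ℤ)-d-2) = 0 := qpz_of_neg (by omega)
      rw [GG, GG, hzm2, z1, z2, z3]
      simp
    · -- m = 0 : T2 - T4 = -GG k
      have z1 : qpz ((L:ℤ)-2*(k:ℤ)-d) = 1 := by rw [hm, qpz_zero]
      have z2 : qpz ((L:ℤ)-2*(k:ℤ)-d-1) = 0 := qpz_of_neg (by omega)
      have z3 : qpz ((L:ℤ)-2*(k:ℤ)-d-2) = 0 := qpz_of_neg (by omega)
      have ex2 : qq ^ ((L:ℤ)-d+(k:ℤ)*((k:ℤ)+d-1)) = qq ^ (k*(E+1)) := by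
        rw [show (L:ℤ)-d+(k:ℤ)*((k:ℤ)+d-1) = ((k*(E+1):ℕ):ℤ) by
          push_cast; linear_combination hm - (k:ℤ)*hE, zpow_natCast]
      rw [GG, GG, hzm2, hqe, z1, z2, z3, ex2, ex4]
      simp only [mul_zero, div_zero, zero_add, sub_zero, zero_sub, mul_one]
      rw [div_qpz_pred, div_sub_div_same, ← neg_div]
      congr 1
      ring
    · -- m ≥ 1
      rcases eq_or_lt_of_le (show (1:ℤ) ≤ (L:ℤ)-2*k-d by omega) with hm1 | hm1
      · -- m = 1
        have z1 : qpz ((L:ℤ)-2*(k:ℤ)-d) = qp 1 := by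
          rw [show (L:ℤ)-2*(k:ℤ)-d = ((1:ℕ):ℤ) by omega, qpz_natCast]
        have z2 : qpz ((L:ℤ)-2*(k:ℤ)-d-1) = 1 := by
          rw [show (L:ℤ)-2*(k:ℤ)-d-1 = ((0:ℕ):ℤ) by omega, qpz_natCast, qp_zero]
        have z3 : qpz ((L:ℤ)-2*(k:ℤ)-d-2) = 0 := qpz_of_neg (by omega)
        have ex2 : qq ^ ((L:ℤ)-d+(k:ℤ)*((k:ℤ)+d-1)) = qq ^ (k*(E+1)+1) := by
          rw [show (L:ℤ)-d+(k:ℤ)*((k:ℤ)+d-1) = ((k*(E+1)+1:ℕ):ℤ) by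
            push_cast; linear_combination (-hm1) - (k:ℤ)*hE, zpow_natCast]
        have ex3 : qq ^ ((L:ℤ)+(k:ℤ)*((k:ℤ)+d)) = qq ^ ((k+1)*(E+1)) := by
          rw [show (L:ℤ)+(k:ℤ)*((k:ℤ)+d) = (((k+1)*(E+1):ℕ):ℤ) by
            push_cast; linear_combination (-hm1) - ((k:ℤ)+1)*hE, zpow_natCast]
        rw [GG, GG, hzm2, hqe, hqe1, z1, z2, z3, ex1, ex2, ex3, ex4]
        simp only [mul_zero, div_zero, zero_sub, mul_one]
        rw [mul_assoc (qpz ((k:ℤ)-1)), div_qpz_pred]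
        have h1ne := qp_ne_zero 1
        set D := qp k * qp E * (qp 1 * (1 - qq^(E+1))) with hD
        have hDne : D ≠ 0 := mul_ne_zero (mul_ne_zero hkne hAne) (mul_ne_zero h1ne hvne)
        have t1 : qq ^ (k*(E+1)) * qp L / (qp k * qp (E+1))
            = qq ^ (k*(E+1)) * qp L * qp 1 / D := by
          rw [div_eq_div_iff (mul_ne_zero hkne (qp_ne_zero (E+1))) hDne,
            qp_succ E, hD]; ring
        have t2 : qq ^ (k*(E+1)+1) * qp L / (qp k * qp E * qp 1)
            = qq ^ (k*(E+1)+1) * qp L * (1 - qq^(E+1)) / D := by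
          rw [div_eq_div_iff (nz hkne hAne h1ne) hDne, hD]; ring
        have t3 : qq ^ ((k+1)*(E+1)) * qp L / (qp k * qp (E+1))
            = qq ^ ((k+1)*(E+1)) * qp L * qp 1 / D := by
          rw [div_eq_div_iff (mul_ne_zero hkne (qp_ne_zero (E+1))) hDne,
            qp_succ E, hD]; ring
        have t4 : qq ^ (k*E) * qp L / (qp k * qp E * qp 1)
            = qq ^ (k*E) * qp L * (1 - qq^(E+1)) / D := by
          rw [div_eq_div_iff (nz hkne hAne h1ne) hDne, hD]; ring
        have t6 : qq ^ (k*E) * qp L * (1 - qq^k) / (qp k * (qp E * qp 1))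
            = qq ^ (k*E) * qp L * (1 - qq^k) * (1 - qq^(E+1)) / D := by
          rw [div_eq_div_iff (by rw [← mul_assoc]; exact nz hkne hAne h1ne) hDne, hD]; ring
        rw [t1, t2, t3, t4, t6, ← add_div, div_sub_div_same, div_sub_div_same,
          ← neg_div]
        congr 1
        rw [qp_succ 0, qp_zero, one_mul]
        ring
      · -- m ≥ 2
        obtain ⟨M, hM⟩ : ∃ M:ℕ, (M:ℤ) = (L:ℤ)-2*k-d-2 :=
          ⟨((L:ℤ)-2*k-d-2).toNat, Int.toNat_of_nonneg (by omega)⟩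
        have z1 : qpz ((L:ℤ)-2*(k:ℤ)-d) = qp (M+2) := by
          rw [show (L:ℤ)-2*(k:ℤ)-d = ((M+2:ℕ):ℤ) by omega, qpz_natCast]
        have z2 : qpz ((L:ℤ)-2*(k:ℤ)-d-1) = qp (M+1) := by
          rw [show (L:ℤ)-2*(k:ℤ)-d-1 = ((M+1:ℕ):ℤ) by omega, qpz_natCast]
        have z3 : qpz ((L:ℤ)-2*(k:ℤ)-d-2) = qp M := by
          rw [show (L:ℤ)-2*(k:ℤ)-d-2 = ((M:ℕ):ℤ) by omega, qpz_natCast]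
        have ex2 : qq ^ ((L:ℤ)-d+(k:ℤ)*((k:ℤ)+d-1)) = qq ^ (M+2+k+k*E) := by
          rw [show (L:ℤ)-d+(k:ℤ)*((k:ℤ)+d-1) = ((M+2+k+k*E:ℕ):ℤ) by
            push_cast; linear_combination (-hM) - (k:ℤ)*hE, zpow_natCast]
        have ex3 : qq ^ ((L:ℤ)+(k:ℤ)*((k:ℤ)+d)) = qq ^ (M+2+k+E+k*E) := by
          rw [show (L:ℤ)+(k:ℤ)*((k:ℤ)+d) = ((M+2+k+E+k*E:ℕ):ℤ) by
            push_cast; linear_combination (-hM) - ((k:ℤ)+1)*hE, zpow_natCast]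
        rw [GG, GG, hzm2, hze1', hzk, hqe, hqe1, z1, z2, z3, ex1, ex2, ex3, ex4, ex5,
          mul_assoc (qpz ((k:ℤ)-1)), div_qpz_pred]
        have hCne := qp_ne_zero M
        have hwne := one_sub_qq_pow_ne_zero M
        have hxne := one_sub_qq_pow_ne_zero (M+1)
        have hM2 : qp (M+2) = qp M * (1 - qq^(M+1)) * (1 - qq^(M+1+1)) := by
          rw [show M+2 = (M+1)+1 from rfl, qp_succ (M+1), qp_succ M]
        set D := qp k * qp E * qp M *
          ((1 - qq^(E+1)) * (1 - qq^(M+1)) * (1 - qq^(M+1+1))) with hD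
        have hDne : D ≠ 0 := mul_ne_zero (nz hkne hAne hCne) (nz hvne hwne hxne)
        have hd1 : qp k * qp (E+1) * qp (M+1) ≠ 0 := nz hkne (qp_ne_zero _) (qp_ne_zero _)
        have hd2 : qp k * qp E * qp (M+2) ≠ 0 := nz hkne hAne (qp_ne_zero _)
        have hd5 : qp k * qp (E+1) * qp M ≠ 0 := nz hkne (qp_ne_zero _) hCne
        have t1 : qq ^ (k*(E+1)) * qp L / (qp k * qp (E+1) * qp (M+1))
            = qq ^ (k*(E+1)) * qp L * (1 - qq^(M+1+1)) / D := by
          rw [div_eq_div_iff hd1 hDne, qp_succ E, qp_succ M, hD]; ring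
        have t2 : qq ^ (M+2+k+k*E) * qp L / (qp k * qp E * qp (M+2))
            = qq ^ (M+2+k+k*E) * qp L * (1 - qq^(E+1)) / D := by
          rw [div_eq_div_iff hd2 hDne, hM2, hD]; ring
        have t3 : qq ^ (M+2+k+E+k*E) * qp L / (qp k * qp (E+1) * qp (M+1))
            = qq ^ (M+2+k+E+k*E) * qp L * (1 - qq^(M+1+1)) / D := by
          rw [div_eq_div_iff hd1 hDne, qp_succ E, qp_succ M, hD]; ring
        have t4 : qq ^ (k*E) * qp L / (qp k * qp E * qp (M+2))
            = qq ^ (k*E) * qp L * (1 - qq^(E+1)) / D := by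
          rw [div_eq_div_iff hd2 hDne, hM2, hD]; ring
        have t5 : qq ^ ((k+1)*(E+1)) * qp L / (qp k * qp (E+1) * qp M)
            = qq ^ ((k+1)*(E+1)) * qp L * ((1 - qq^(M+1)) * (1 - qq^(M+1+1))) / D := by
          rw [div_eq_div_iff hd5 hDne, qp_succ E, hD]; ring
        have t6 : qq ^ (k*E) * qp L * (1 - qq^k) / (qp k * (qp E * qp (M+2)))
            = qq ^ (k*E) * qp L * (1 - qq^k) * (1 - qq^(E+1)) / D := by
          rw [div_eq_div_iff (by rw [← mul_assoc]; exact hd2) hDne, hM2, hD]; ring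
        rw [t1, t2, t3, t4, t5, t6, ← add_div, div_sub_div_same, div_sub_div_same,
          div_sub_div_same]
        congr 1
        ring

lemma GG_zero (d : ℤ) (L : ℕ) : GG d L 0 = 0 := by
  rw [GG, qpz_of_neg (show ((0:ℕ):ℤ)-1 < 0 by norm_num)]
  simp

lemma GG_top (d : ℤ) (L : ℕ) : GG d L (L+1) = 0 := by
  rcases le_or_gt (-(L:ℤ)-1) d with hd | hd
  · rw [GG, qpz_of_neg (show (L:ℤ)-2*((L+1:ℕ):ℤ)-d < 0 by push_cast; omega)]
    simp
  · rw [GG, qpz_of_neg (show ((L+1:ℕ):ℤ)+d < 0 by push_cast; omega)]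
    simp

lemma rec0 (d : ℤ) (L : ℕ) :
    qT 0 (d+1) L + qq^((L:ℤ)-d) * qT 1 d L - qq^((L:ℤ)) * qT 1 (d+1) L - qT 0 d L = 0 := by
  unfold qT
  rw [Finset.mul_sum, Finset.mul_sum, ← Finset.sum_add_distrib, ← Finset.sum_sub_distrib,
    ← Finset.sum_sub_distrib]
  have : ∀ k ∈ Finset.range (L+1),
      qq ^ ((k:ℤ) * ((k:ℤ) + (d+1) - 0)) * qp L /
        (qp k * qpz ((k:ℤ) + (d+1)) * qpz ((L:ℤ) - 2*k - (d+1)))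
      + qq^((L:ℤ)-d) * (qq ^ ((k:ℤ) * ((k:ℤ) + d - 1)) * qp L /
        (qp k * qpz ((k:ℤ) + d) * qpz ((L:ℤ) - 2*k - d)))
      - qq^((L:ℤ)) * (qq ^ ((k:ℤ) * ((k:ℤ) + (d+1) - 1)) * qp L /
        (qp k * qpz ((k:ℤ) + (d+1)) * qpz ((L:ℤ) - 2*k - (d+1))))
      - qq ^ ((k:ℤ) * ((k:ℤ) + d - 0)) * qp L /
        (qp k * qpz ((k:ℤ) + d) * qpz ((L:ℤ) - 2*k - d))
      = GG d L (k+1) - GG d L k := by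
    intro k _
    rw [show (k:ℤ) + (d+1) = (k:ℤ)+d+1 by ring,
      show (L:ℤ) - 2*(k:ℤ) - (d+1) = (L:ℤ)-2*(k:ℤ)-d-1 by ring,
      show (k:ℤ) * ((k:ℤ) + d + 1 - 0) = (k:ℤ)*((k:ℤ)+d+1) by ring,
      show (k:ℤ) * ((k:ℤ) + d + 1 - 1) = (k:ℤ)*((k:ℤ)+d) by ring,
      show (k:ℤ) * ((k:ℤ) + d - 0) = (k:ℤ)*((k:ℤ)+d) by ring,
      ← mul_div_assoc, ← mul_assoc, ← zpow_add₀ qq_ne_zero,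
      ← mul_div_assoc, ← mul_assoc, ← zpow_add₀ qq_ne_zero]
    exact step d L k
  rw [Finset.sum_congr rfl this, Finset.sum_range_sub (GG d L), GG_zero, GG_top, sub_zero]

lemma qT_vanish (n d : ℤ) (L : ℕ) (h : (L:ℤ) < d ∨ d < -(L:ℤ)) : qT n d L = 0 := by
  unfold qT
  apply Finset.sum_eq_zero
  intro k hk
  simp only [Finset.mem_range] at hk
  rcases h with h | h
  · rw [qpz_of_neg (show (L:ℤ) - 2*k - d < 0 by omega)]
    simp
  · rw [qpz_of_neg (show (k:ℤ) + d < 0 by omega)]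
    simp

lemma qT_symm_nonneg (n d : ℤ) (L : ℕ) (hd : 0 ≤ d) : qT n d L = qq ^ (n*d) * qT n (-d) L := by
  lift d to ℕ using hd with D
  have hext : qT n (-(D:ℤ)) L = ∑ j ∈ Finset.range (L + 1 + D),
      qq ^ ((j : ℤ) * ((j : ℤ) + -(D:ℤ) - n)) * qp L /
        (qp j * qpz ((j : ℤ) + -(D:ℤ)) * qpz ((L : ℤ) - 2 * j - -(D:ℤ))) := by
    unfold qT
    apply Finset.sum_subset (by apply Finset.range_subset_range.2; omega)
    intro j hj hnj
    simp only [Finset.mem_range] at hj hnj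
    rcases lt_or_ge ((j:ℤ)) (D:ℤ) with hc | hc
    · rw [qpz_of_neg (show (j:ℤ) + -(D:ℤ) < 0 by omega)]; simp
    · rw [qpz_of_neg (show (L:ℤ) - 2*j - -(D:ℤ) < 0 by omega)]; simp
  rw [hext, add_comm (L+1) D, Finset.sum_range_add]
  have h0 : ∑ j ∈ Finset.range D,
      qq ^ ((j : ℤ) * ((j : ℤ) + -(D:ℤ) - n)) * qp L /
        (qp j * qpz ((j : ℤ) + -(D:ℤ)) * qpz ((L : ℤ) - 2 * j - -(D:ℤ))) = 0 := by
    apply Finset.sum_eq_zero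
    intro j hj
    simp only [Finset.mem_range] at hj
    rw [qpz_of_neg (show (j:ℤ) + -(D:ℤ) < 0 by omega)]; simp
  rw [h0, zero_add, Finset.mul_sum]
  unfold qT
  apply Finset.sum_congr rfl
  intro k _
  have e1 : ((D + k : ℕ) : ℤ) + -(D:ℤ) = (k:ℤ) := by push_cast; ring
  have e2 : ((L:ℤ) - 2 * ((D + k : ℕ):ℤ) - -(D:ℤ)) = (L:ℤ) - 2*(k:ℤ) - (D:ℤ) := by
    push_cast; ring
  have e3 : (k:ℤ) + (D:ℤ) = ((D + k : ℕ) : ℤ) := by push_cast; ring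
  rw [e1, e2, e3, qpz_natCast, qpz_natCast]
  rw [mul_comm (qp (D+k)) (qp k), ← mul_div_assoc, ← mul_assoc, ← zpow_add₀ qq_ne_zero]
  congr 3
  push_cast; ring

lemma qT_symm (n d : ℤ) (L : ℕ) : qT n d L = qq ^ (n*d) * qT n (-d) L := by
  rcases le_or_gt 0 d with hd | hd
  · exact qT_symm_nonneg n d L hd
  · have h := qT_symm_nonneg n (-d) L (by omega)
    rw [neg_neg] at h
    rw [h, ← mul_assoc, ← zpow_add₀ qq_ne_zero,
      show n*d + n*(-d) = 0 by ring, zpow_zero, one_mul]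

lemma qT0_neg (d : ℤ) (L : ℕ) : qT 0 (-d) L = qT 0 d L := by
  rw [qT_symm 0 d L, zero_mul, zpow_zero, one_mul]

lemma qT1_neg (d : ℤ) (L : ℕ) : qT 1 (-d) L = qq ^ (-d) * qT 1 d L := by
  have h := qT_symm 1 (-d) L
  rw [neg_neg, one_mul] at h
  exact h

lemma arg_big {t a L l c : ℤ} (hL : 0 ≤ L) (ha1 : 1 ≤ a) (ha2 : a ≤ t)
    (hc1 : -(a+t+1) ≤ c) (hc2 : c ≤ 0)
    (hl : l < -(L+a+t+2) ∨ (L+a+t+2) ≤ l) :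
    L < c - (2*t+1)*l ∨ c - (2*t+1)*l < -L := by
  rcases hl with hl | hl
  · left
    nlinarith [mul_nonneg (show (0:ℤ) ≤ 2*t-2 by omega) (show (0:ℤ) ≤ -l by omega)]
  · right
    nlinarith [mul_nonneg (show (0:ℤ) ≤ 2*t-2 by omega) (show (0:ℤ) ≤ l by omega)]

/-- `Y^{n;t}_{a,b}(L)` for `t = s/2 ∈ (1/2)ℤ` and `t' = 2t+1 = s+1`:
`Y = Σ_{λ∈ℤ} ( q^{λ²tt' + λ(t'b − 2ta)} T(n, a−b−t'λ, L)
             − q^{(λt+b)(λt'+2a)} T(n, −a−b−t'λ, L) )`.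
All exponents are integers (written in expanded form below, using that
`s(s+1)/2 ∈ ℤ`), and the bilateral sum has finite support since
`T(n,d,L) = 0` for `|d| > L`; it is rendered by `finsum`. -/
noncomputable def qY (s n a b : ℤ) (L : ℕ) : RatFunc ℚ :=
  ∑ᶠ l : ℤ,
    (qq ^ (l ^ 2 * (s * (s + 1) / 2) + l * ((s + 1) * b - s * a)) *
        qT n (a - b - (s + 1) * l) L -
      qq ^ (l ^ 2 * (s * (s + 1) / 2) + l * s * a + l * (s + 1) * b + 2 * a * b) *
        qT n (-a - b - (s + 1) * l) L)

/-- For `t ∈ ℤ` (so `s = 2t`) and `1 ≤ a ≤ t`, `L ≥ 0`: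
`Y^{0;t}_{a,t}(L) + q^{L+1−a+t} Y^{1;t}_{a,t+1}(L) = 0`. -/

theorem qY_top_boundary_integer (t a : ℤ) (L : ℕ) (ha1 : 1 ≤ a) (ha2 : a ≤ t) :
    qY (2 * t) 0 a t L + qq ^ ((L : ℤ) + 1 - a + t) * qY (2 * t) 1 a (t + 1) L = 0 := by
  set S : Finset ℤ := Finset.Icc (-((L:ℤ)+a+t+2)) (((L:ℤ)+a+t+2)-1) with hS
  have hmem : ∀ l : ℤ, l ∈ S ↔ (-((L:ℤ)+a+t+2) ≤ l ∧ l ≤ ((L:ℤ)+a+t+2)-1) := by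
    intro l; rw [hS, Finset.mem_Icc]
  have e0 : qY (2 * t) 0 a t L = ∑ l ∈ S,
      (qq ^ ((l) ^ 2 * (2 * t * (2 * t + 1) / 2) + (l) * ((2 * t + 1) * (t) - 2 * t * a)) * qT 0 (a - (t) - (2 * t + 1) * (l)) L -
      qq ^ ((l) ^ 2 * (2 * t * (2 * t + 1) / 2) + (l) * (2 * t) * a + (l) * (2 * t + 1) * (t) + 2 * a * (t)) * qT 0 (-a - (t) - (2 * t + 1) * (l)) L) := by
    rw [qY]
    apply finsum_eq_finset_sum_of_support_subset
    intro l hl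
    simp only [Function.mem_support] at hl
    by_contra hmem'
    apply hl
    have hlr : l < -((L:ℤ)+a+t+2) ∨ ((L:ℤ)+a+t+2) ≤ l := by
      rw [Finset.mem_coe, hmem l] at hmem'; omega
    rw [qT_vanish _ _ _ (arg_big (by positivity) ha1 ha2 (by omega) (by omega) hlr),
        qT_vanish _ _ _ (arg_big (by positivity) ha1 ha2 (by omega) (by omega) hlr)]
    simp
  have e1 : qY (2 * t) 1 a (t + 1) L = ∑ l ∈ S,
      (qq ^ ((l) ^ 2 * (2 * t * (2 * t + 1) / 2) + (l) * ((2 * t + 1) * (t + 1) - 2 * t * a)) * qT 1 (a - (t + 1) - (2 * t + 1) * (l)) L -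
      qq ^ ((l) ^ 2 * (2 * t * (2 * t + 1) / 2) + (l) * (2 * t) * a + (l) * (2 * t + 1) * (t + 1) + 2 * a * (t + 1)) * qT 1 (-a - (t + 1) - (2 * t + 1) * (l)) L) := by
    rw [qY]
    apply finsum_eq_finset_sum_of_support_subset
    intro l hl
    simp only [Function.mem_support] at hl
    by_contra hmem'
    apply hl
    have hlr : l < -((L:ℤ)+a+t+2) ∨ ((L:ℤ)+a+t+2) ≤ l := by
      rw [Finset.mem_coe, hmem l] at hmem'; omega
    rw [qT_vanish _ _ _ (arg_big (by positivity) ha1 ha2 (by omega) (by omega) hlr),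
        qT_vanish _ _ _ (arg_big (by positivity) ha1 ha2 (by omega) (by omega) hlr)]
    simp
  rw [e0, e1, Finset.mul_sum, ← Finset.sum_add_distrib]
  have hsplit : ∀ l ∈ S,
      (qq ^ ((l) ^ 2 * (2 * t * (2 * t + 1) / 2) + (l) * ((2 * t + 1) * (t) - 2 * t * a)) * qT 0 (a - (t) - (2 * t + 1) * (l)) L -
      qq ^ ((l) ^ 2 * (2 * t * (2 * t + 1) / 2) + (l) * (2 * t) * a + (l) * (2 * t + 1) * (t) + 2 * a * (t)) * qT 0 (-a - (t) - (2 * t + 1) * (l)) L)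
      + qq ^ ((L : ℤ) + 1 - a + t) * (qq ^ ((l) ^ 2 * (2 * t * (2 * t + 1) / 2) + (l) * ((2 * t + 1) * (t + 1) - 2 * t * a)) * qT 1 (a - (t + 1) - (2 * t + 1) * (l)) L -
      qq ^ ((l) ^ 2 * (2 * t * (2 * t + 1) / 2) + (l) * (2 * t) * a + (l) * (2 * t + 1) * (t + 1) + 2 * a * (t + 1)) * qT 1 (-a - (t + 1) - (2 * t + 1) * (l)) L)
      = (qq ^ ((l) ^ 2 * (2 * t * (2 * t + 1) / 2) + (l) * ((2 * t + 1) * (t) - 2 * t * a)) * qT 0 (a - (t) - (2 * t + 1) * (l)) L + qq ^ ((L : ℤ) + 1 - a + t) * (qq ^ ((l) ^ 2 * (2 * t * (2 * t + 1) / 2) + (l) * ((2 * t + 1) * (t + 1) - 2 * t * a)) * qT 1 (a - (t + 1) - (2 * t + 1) * (l)) L))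
        - (qq ^ ((l) ^ 2 * (2 * t * (2 * t + 1) / 2) + (l) * (2 * t) * a + (l) * (2 * t + 1) * (t) + 2 * a * (t)) * qT 0 (-a - (t) - (2 * t + 1) * (l)) L + qq ^ ((L : ℤ) + 1 - a + t) * (qq ^ ((l) ^ 2 * (2 * t * (2 * t + 1) / 2) + (l) * (2 * t) * a + (l) * (2 * t + 1) * (t + 1) + 2 * a * (t + 1)) * qT 1 (-a - (t + 1) - (2 * t + 1) * (l)) L)) := by
    intro l _
    ring
  rw [Finset.sum_congr rfl hsplit, Finset.sum_sub_distrib]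
  have hreind : ∑ l ∈ S, (qq ^ ((l) ^ 2 * (2 * t * (2 * t + 1) / 2) + (l) * (2 * t) * a + (l) * (2 * t + 1) * (t) + 2 * a * (t)) * qT 0 (-a - (t) - (2 * t + 1) * (l)) L + qq ^ ((L : ℤ) + 1 - a + t) * (qq ^ ((l) ^ 2 * (2 * t * (2 * t + 1) / 2) + (l) * (2 * t) * a + (l) * (2 * t + 1) * (t + 1) + 2 * a * (t + 1)) * qT 1 (-a - (t + 1) - (2 * t + 1) * (l)) L))
      = ∑ l ∈ S, (qq ^ ((-1 - l) ^ 2 * (2 * t * (2 * t + 1) / 2) + (-1 - l) * (2 * t) * a + (-1 - l) * (2 * t + 1) * (t) + 2 * a * (t)) * qT 0 (-a - (t) - (2 * t + 1) * (-1 - l)) L + qq ^ ((L : ℤ) + 1 - a + t) * (qq ^ ((-1 - l) ^ 2 * (2 * t * (2 * t + 1) / 2) + (-1 - l) * (2 * t) * a + (-1 - l) * (2 * t + 1) * (t + 1) + 2 * a * (t + 1)) * qT 1 (-a - (t + 1) - (2 * t + 1) * (-1 - l)) L)) := by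
    apply Finset.sum_nbij' (i := fun l => -1 - l) (j := fun l => -1 - l)
    · intro a ha; rw [hmem] at ha ⊢; omega
    · intro a ha; rw [hmem] at ha ⊢; omega
    · intro a _; ring
    · intro a _; ring
    · intro a _
      rw [show (-1:ℤ) - (-1 - a) = a by ring]
  rw [hreind, ← Finset.sum_sub_distrib]
  apply Finset.sum_eq_zero
  intro l _
  have hdiv : 2 * t * (2 * t + 1) / 2 = t * (2 * t + 1) := by
    rw [show 2 * t * (2 * t + 1) = 2 * (t * (2 * t + 1)) by ring]
    exact Int.mul_ediv_cancel_left _ two_ne_zero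
  rw [hdiv]
  rw [show -a - t - (2 * t + 1) * (-1 - l) = -(a - t - 1 - (2 * t + 1) * l) by ring,
      show -a - (t + 1) - (2 * t + 1) * (-1 - l) = -(a - t - 1 - (2 * t + 1) * l + 1) by ring,
      qT0_neg, qT1_neg,
      show a - (t + 1) - (2 * t + 1) * l = a - t - 1 - (2 * t + 1) * l by ring,
      show a - t - (2 * t + 1) * l = a - t - 1 - (2 * t + 1) * l + 1 by ring,
      show (-1 - l) ^ 2 * (t * (2 * t + 1)) + (-1 - l) * (2 * t) * a + (-1 - l) * (2 * t + 1) * t + 2 * a * t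
        = l ^ 2 * (t * (2 * t + 1)) + l * ((2 * t + 1) * t - 2 * t * a) by ring]
  have hr := rec0 (a - t - 1 - (2 * t + 1) * l) L
  have c1 : qq ^ ((L : ℤ) + 1 - a + t) * qq ^ (l ^ 2 * (t * (2 * t + 1)) + l * ((2 * t + 1) * (t + 1) - 2 * t * a))
      = qq ^ (l ^ 2 * (t * (2 * t + 1)) + l * ((2 * t + 1) * t - 2 * t * a))
        * qq ^ ((L:ℤ) - (a - t - 1 - (2 * t + 1) * l)) := by
    rw [← zpow_add₀ qq_ne_zero, ← zpow_add₀ qq_ne_zero]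
    congr 1
    ring
  have c3 : qq ^ ((L : ℤ) + 1 - a + t) * (qq ^ ((-1 - l) ^ 2 * (t * (2 * t + 1)) + (-1 - l) * (2 * t) * a + (-1 - l) * (2 * t + 1) * (t + 1) + 2 * a * (t + 1))
        * qq ^ (-(a - t - 1 - (2 * t + 1) * l + 1)))
      = qq ^ (l ^ 2 * (t * (2 * t + 1)) + l * ((2 * t + 1) * t - 2 * t * a)) * qq ^ ((L:ℤ)) := by
    rw [← zpow_add₀ qq_ne_zero, ← zpow_add₀ qq_ne_zero, ← zpow_add₀ qq_ne_zero]
    congr 1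
    ring
  linear_combination qq ^ (l ^ 2 * (t * (2 * t + 1)) + l * ((2 * t + 1) * t - 2 * t * a)) * hr
    + qT 1 (a - t - 1 - (2 * t + 1) * l) L * c1
    - qT 1 (a - t - 1 - (2 * t + 1) * l + 1) L * c3
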